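/- For the Gaussian Unitary Ensemble of N×N matrices, the ensemble-averaged Lanczos coefficients are b_n = √(2/N) · Γ(N − n + 1/2)/Γ(N − n), and in the double scaling limit N, n → ∞ with n/N = t fixed, 0 < t < 1, one has b_n → √2 · √(1 − t). -/

import Mathlib

open Real Filter Stirling Nat


lemma aux1 (k : ℕ) :
    Real.Gamma (((k:ℝ) + 1) + 1/2) / Real.Gamma ((k:ℝ) + 1) / Real.sqrt ((k:ℝ)+1)
      = Real.sqrt π * stirlingSeq (2*(k+1)) / (stirlingSeq (k+1))^2 := by
  have hk1 : (0:ℝ) < (k:ℝ) + 1 := by positivity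
  have hsk : (0:ℝ) < Real.sqrt ((k:ℝ)+1) := Real.sqrt_pos.mpr hk1
  have hsπ : (0:ℝ) < Real.sqrt π := Real.sqrt_pos.mpr Real.pi_pos
  have hΓm : Real.Gamma ((k:ℝ)+1) = (k ! : ℝ) := by
    exact_mod_cast Real.Gamma_nat_eq_factorial k
  have hΓ2m : Real.Gamma (2*((k:ℝ)+1)) = ((2*k+1)! : ℝ) := by
    rw [show 2*((k:ℝ)+1) = ((2*k+1 : ℕ):ℝ) + 1 by push_cast; ring]
    exact_mod_cast Real.Gamma_nat_eq_factorial (2*k+1)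
  have hpow : (2:ℝ) ^ ((1:ℝ) - 2*((k:ℝ)+1)) = ((2:ℝ)^(2*k+1))⁻¹ := by
    rw [show (1:ℝ) - 2*((k:ℝ)+1) = -((2*k+1 : ℕ):ℝ) by push_cast; ring,
      Real.rpow_neg (by norm_num), Real.rpow_natCast]
  have hΓne : Real.Gamma ((k:ℝ)+1) ≠ 0 := by rw [hΓm]; positivity
  have hdup := Real.Gamma_mul_Gamma_add_half ((k:ℝ)+1)
  rw [hΓ2m, hpow] at hdup
  have hΓhalf : Real.Gamma (((k:ℝ)+1) + 1/2)
      = ((2*k+1)! : ℝ) * ((2:ℝ)^(2*k+1))⁻¹ * Real.sqrt π / (k ! : ℝ) := by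
    rw [← hΓm] at *
    field_simp at hdup ⊢
    linear_combination hdup
  have hs1 : (stirlingSeq (k+1))^2
      = (((k:ℝ)+1) * (k ! : ℝ))^2 / (2 * ((k:ℝ)+1) * (((k:ℝ)+1) / Real.exp 1)^(2*(k+1))) := by
    rw [stirlingSeq]
    rw [div_pow, mul_pow, Real.sq_sqrt (by positivity), ← pow_mul, mul_comm (k+1) 2]
    push_cast [Nat.factorial_succ]
    ring
  have hs2 : stirlingSeq (2*(k+1))
      = ((2*(k:ℝ)+2) * ((2*k+1)! : ℝ)) /
        (2 * Real.sqrt ((k:ℝ)+1) * ((2:ℝ)^(2*(k+1)) * (((k:ℝ)+1) / Real.exp 1)^(2*(k+1)))) := by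
    rw [stirlingSeq]
    have h4 : (2 * ((2*(k+1):ℕ):ℝ)) = 4 * ((k:ℝ)+1) := by push_cast; ring
    rw [h4, show (4:ℝ) * ((k:ℝ)+1) = 2^2 * ((k:ℝ)+1) by norm_num,
      Real.sqrt_mul (by positivity), Real.sqrt_sq (by norm_num)]
    have h5 : (((2*(k+1):ℕ):ℝ) / Real.exp 1) = 2 * (((k:ℝ)+1)/Real.exp 1) := by
      push_cast; ring
    rw [h5, mul_pow]
    have h6 : ((2*(k+1))! : ℝ) = (2*(k:ℝ)+2) * ((2*k+1)! : ℝ) := by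
      rw [show 2*(k+1) = (2*k+1)+1 by ring, Nat.factorial_succ]
      push_cast; ring
    rw [h6]
  rw [hΓhalf, hΓm, hs1, hs2]
  have hA : (((k:ℝ)+1) / Real.exp 1)^(2*(k+1)) ≠ 0 := by positivity
  have hkf : (k ! : ℝ) ≠ 0 := by positivity
  field_simp
  ring


lemma tendsto_ratio :
    Tendsto (fun m : ℕ => Real.Gamma ((m:ℝ) + 1/2) / Real.Gamma (m:ℝ) / Real.sqrt m)
      atTop (nhds 1) := by
  have h2 : Tendsto (fun m : ℕ => 2*m) atTop atTop :=
    tendsto_atTop_atTop_of_monotone (fun a b h => by omega) (fun b => ⟨b, by omega⟩)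
  have hA : Tendsto (fun m : ℕ => Real.sqrt π * stirlingSeq (2*m) / (stirlingSeq m)^2) atTop
      (nhds (Real.sqrt π * Real.sqrt π / (Real.sqrt π)^2)) :=
    (tendsto_const_nhds.mul (tendsto_stirlingSeq_sqrt_pi.comp h2)).div
      (tendsto_stirlingSeq_sqrt_pi.pow 2)
      (by simp [Real.sq_sqrt Real.pi_pos.le])
  have hval : Real.sqrt π * Real.sqrt π / (Real.sqrt π)^2 = 1 := by
    rw [Real.mul_self_sqrt Real.pi_pos.le, Real.sq_sqrt Real.pi_pos.le,
      div_self Real.pi_ne_zero]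
  rw [hval] at hA
  refine hA.congr' ?_
  filter_upwards [eventually_ge_atTop 1] with m hm
  obtain ⟨k, rfl⟩ := Nat.exists_eq_add_of_le hm
  have hcast : ((1+k : ℕ):ℝ) = (k:ℝ) + 1 := by push_cast; ring
  have := aux1 k
  rw [hcast, show 1 + k = k + 1 by ring]
  exact this.symm
theorem gue_lanczos_double_scaling (t : ℝ) (ht0 : 0 < t) (ht1 : t < 1) :
    Filter.Tendsto
      (fun N : ℕ => Real.sqrt (2 / (N : ℝ)) *
        Real.Gamma ((N : ℝ) - (⌊t * (N : ℝ)⌋₊ : ℝ) + 1 / 2) /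
        Real.Gamma ((N : ℝ) - (⌊t * (N : ℝ)⌋₊ : ℝ)))
      Filter.atTop (nhds (Real.sqrt 2 * Real.sqrt (1 - t))) := by
  set m : ℕ → ℕ := fun N => N - ⌊t * (N:ℝ)⌋₊ with hmdef
  have hflt : ∀ᶠ N : ℕ in atTop, ⌊t * (N:ℝ)⌋₊ < N := by
    filter_upwards [eventually_ge_atTop 1] with N hN
    have hN1 : (1:ℝ) ≤ (N:ℝ) := by exact_mod_cast hN
    have : t * (N:ℝ) < (N:ℝ) := by nlinarith
    exact Nat.floor_lt (by positivity) |>.mpr this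
  have hcast : ∀ᶠ N : ℕ in atTop, ((N:ℝ) - (⌊t * (N:ℝ)⌋₊ : ℝ)) = ((m N : ℕ):ℝ) := by
    filter_upwards [hflt] with N h
    rw [hmdef]
    push_cast [Nat.cast_sub h.le]
    ring
  have hfl_le : ∀ N : ℕ, (⌊t * (N:ℝ)⌋₊ : ℝ) ≤ t * N := fun N => Nat.floor_le (by positivity)
  have hfl_gt : ∀ N : ℕ, t * N - 1 < (⌊t * (N:ℝ)⌋₊ : ℝ) := fun N =>
    Nat.sub_one_lt_floor _
  -- m N → ∞
  have hmtop : Tendsto m atTop atTop := by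
    rw [← tendsto_natCast_atTop_iff (R := ℝ)]
    apply tendsto_atTop_mono' _ _ ((tendsto_natCast_atTop_atTop (R := ℝ)).const_mul_atTop
      (show (0:ℝ) < 1 - t by linarith))
    filter_upwards [hcast] with N h
    rw [← h]
    have := hfl_le N
    linarith
  -- m N / N → 1 - t
  have hratio : Tendsto (fun N : ℕ => ((m N : ℕ):ℝ) / (N:ℝ)) atTop (nhds (1 - t)) := by
    have hub : Tendsto (fun N : ℕ => (1 - t) + 1/(N:ℝ)) atTop (nhds (1 - t)) := by
      simpa using tendsto_const_nhds.add
        (tendsto_one_div_atTop_nhds_zero_nat : Tendsto (fun n : ℕ => 1 / (n:ℝ)) atTop (nhds 0))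
    refine tendsto_of_tendsto_of_tendsto_of_le_of_le' tendsto_const_nhds hub ?_ ?_
    · filter_upwards [hcast, eventually_ge_atTop 1] with N h hN
      have hN1 : (1:ℝ) ≤ (N:ℝ) := by exact_mod_cast hN
      rw [← h, le_div_iff₀ (by linarith)]
      have := hfl_le N
      linarith
    · filter_upwards [hcast, eventually_ge_atTop 1] with N h hN
      have hN1 : (1:ℝ) ≤ (N:ℝ) := by exact_mod_cast hN
      rw [← h, div_le_iff₀ (by linarith)]
      have := hfl_gt N
      have : ((⌊t * (N:ℝ)⌋₊ : ℝ)) > t * N - 1 := this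
      field_simp
      have e : (⌊(N:ℝ) * t⌋₊ : ℝ) = ⌊t * (N:ℝ)⌋₊ := by rw [mul_comm]
      nlinarith
  -- sqrt factor
  have hsq : Tendsto (fun N : ℕ => Real.sqrt (2/(N:ℝ) * ((m N : ℕ):ℝ))) atTop
      (nhds (Real.sqrt (2 * (1 - t)))) := by
    have : Tendsto (fun N : ℕ => 2/(N:ℝ) * ((m N : ℕ):ℝ)) atTop (nhds (2 * (1-t))) := by
      have := hratio.const_mul 2
      refine this.congr fun N => by ring
    exact this.sqrt
  have hmain := (tendsto_ratio.comp hmtop).mul hsq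
  rw [one_mul] at hmain
  have hval : Real.sqrt (2 * (1 - t)) = Real.sqrt 2 * Real.sqrt (1 - t) :=
    Real.sqrt_mul (by norm_num) _
  rw [hval] at hmain
  refine hmain.congr' ?_
  filter_upwards [hflt, hcast, eventually_ge_atTop 1] with N hlt h hN
  have hm1 : 1 ≤ m N := by simp only [hmdef]; omega
  have hmpos : (0:ℝ) < ((m N : ℕ):ℝ) := by exact_mod_cast hm1
  have hsm : (0:ℝ) < Real.sqrt ((m N : ℕ):ℝ) := Real.sqrt_pos.mpr hmpos
  have hNpos : (0:ℝ) < (N:ℝ) := by exact_mod_cast hN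
  simp only [Function.comp_apply]
  rw [h, Real.sqrt_mul (by positivity : (0:ℝ) ≤ 2/(N:ℝ))]
  field_simp
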